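/- Let n be a natural number and let 0 ≤ a ≤ b be real numbers. Then ∫_a^b ∫_a^b min(x^n, y^n) dx dy = (2/((n+1)(n+2)))·[b^{n+2} − a^{n+1}((n+2)b − (n+1)a)]. -/

import Mathlib

open intervalIntegral

theorem qIntegral_pow (n : ℕ) (a b : ℝ) (ha : 0 ≤ a) (hab : a ≤ b) :
    (∫ y in a..b, ∫ x in a..b, min (x ^ n) (y ^ n))
      = 2 / (((n : ℝ) + 1) * ((n : ℝ) + 2)) *
        (b ^ (n + 2) - a ^ (n + 1) * (((n : ℝ) + 2) * b - ((n : ℝ) + 1) * a)) := by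
  have hn1 : ((n:ℝ)+1) ≠ 0 := by positivity
  have hn2 : ((n:ℝ)+2) ≠ 0 := by positivity
  have inner : ∀ y ∈ Set.uIcc a b, (∫ x in a..b, min (x ^ n) (y ^ n))
      = (1/((n:ℝ)+1) - 1) * y^(n+1) + b * y^n + (- a^(n+1)/((n:ℝ)+1)) := by
    intro y hy
    rw [Set.uIcc_of_le hab] at hy
    obtain ⟨hay, hyb⟩ := hy
    have h1 : (∫ x in a..y, min (x ^ n) (y ^ n)) = ∫ x in a..y, x ^ n := by
      apply integral_congr
      intro x hx
      rw [Set.uIcc_of_le hay] at hx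
      exact min_eq_left (pow_le_pow_left₀ (le_trans ha hx.1) hx.2 n)
    have h2 : (∫ x in y..b, min (x ^ n) (y ^ n)) = ∫ x in y..b, y ^ n := by
      apply integral_congr
      intro x hx
      rw [Set.uIcc_of_le hyb] at hx
      exact min_eq_right (pow_le_pow_left₀ (le_trans ha hay) hx.1 n)
    have hc : ∀ c d : ℝ, IntervalIntegrable (fun x => min (x ^ n) (y ^ n))
        MeasureTheory.volume c d := fun c d =>
      ((continuous_pow n).min continuous_const).intervalIntegrable c d
    rw [← integral_add_adjacent_intervals (hc a y) (hc y b), h1, h2,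
      integral_pow, integral_const]
    push_cast
    field_simp
    ring
  rw [integral_congr inner]
  have key : (∫ y in a..b, ((1/((n:ℝ)+1) - 1) * y^(n+1) + b * y^n + (- a^(n+1)/((n:ℝ)+1))))
      = (1/((n:ℝ)+1) - 1) * ((b^(n+2) - a^(n+2))/((n:ℝ)+2))
        + b * ((b^(n+1) - a^(n+1))/((n:ℝ)+1))
        + (- a^(n+1)/((n:ℝ)+1)) * (b - a) := by
    have i1 : IntervalIntegrable (fun y : ℝ => (1/((n:ℝ)+1) - 1) * y^(n+1))
        MeasureTheory.volume a b :=
      (Continuous.intervalIntegrable (by continuity) a b)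
    have i2 : IntervalIntegrable (fun y : ℝ => b * y^n) MeasureTheory.volume a b :=
      (Continuous.intervalIntegrable (by continuity) a b)
    have i3 : IntervalIntegrable (fun _ : ℝ => - a^(n+1)/((n:ℝ)+1)) MeasureTheory.volume a b :=
      intervalIntegrable_const
    rw [integral_add (i1.add i2) i3, integral_add i1 i2,
      integral_const_mul, integral_const_mul, integral_pow, integral_pow, integral_const]
    push_cast
    simp only [smul_eq_mul]
    field_simp
    ring
  rw [key]
  field_simp
  ring
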